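/- Let ε ∈ (0,1), let (x_t)_{t≥1} be a sequence in [0,1], and let α_t = ∏_{s=1}^{t-1}(1 − x_s) (so α_1 = 1). Assume that for every T ≥ 1, (1/T)·∑_{t=1}^T ∑_{s=1}^{t-1} α_s x_s ≤ ε. Then for every t ≥ 1 with (t−1)·ε < 1, one has α_t x_t ≤ ε and x_t ≤ ε/(1 − (t−1)ε). -/

import Mathlib

open Finset

/-- Any strategy of Player I guaranteeing
`(1/T) ∑_{t=1}^T ∑_{s=1}^{t-1} α_s x_s ≤ ε` for all `T ≥ 1` must play small
probabilities of the absorbing action: for every `t ≥ 1` with `(t−1)ε < 1`,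
one has `α_t x_t ≤ ε` and `x_t ≤ ε/(1 − (t−1)ε)`. -/
theorem big_match_small_absorption_probabilities
    (ε : ℝ) (hε : ε ∈ Set.Ioo (0 : ℝ) 1)
    (x : ℕ → ℝ) (hx : ∀ t, x t ∈ Set.Icc (0 : ℝ) 1)
    (α : ℕ → ℝ) (hα : ∀ t, α t = ∏ s ∈ Finset.Icc 1 (t - 1), (1 - x s))
    (hyp : ∀ T : ℕ, 1 ≤ T →
      (T : ℝ)⁻¹ * ∑ t ∈ Finset.Icc 1 T, ∑ s ∈ Finset.Icc 1 (t - 1),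
        α s * x s ≤ ε) :
    ∀ t : ℕ, 1 ≤ t → ((t : ℝ) - 1) * ε < 1 →
      α t * x t ≤ ε ∧ x t ≤ ε / (1 - ((t : ℝ) - 1) * ε) := by
  obtain ⟨hε0, hε1⟩ := hε
  have hα0 : ∀ s, 0 ≤ α s := fun s => by
    rw [hα]
    exact Finset.prod_nonneg fun i _ => by linarith [(hx i).2]
  have hterm : ∀ s, 0 ≤ α s * x s := fun s => mul_nonneg (hα0 s) (hx s).1
  -- partial sums are bounded by ε
  have hS : ∀ m : ℕ, ∑ s ∈ Finset.Icc 1 m, α s * x s ≤ ε := by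
    intro m
    by_contra hcon
    push_neg at hcon
    set S := ∑ s ∈ Finset.Icc 1 m, α s * x s with hSdef
    have hSε : 0 < S - ε := by linarith
    obtain ⟨T, hT⟩ := exists_nat_gt (max (m : ℝ) ((m : ℝ) * S / (S - ε)))
    have hTm : (m : ℝ) < T := lt_of_le_of_lt (le_max_left _ _) hT
    have hTm' : m < T := by exact_mod_cast hTm
    have hT1 : 1 ≤ T := Nat.one_le_iff_ne_zero.mpr (by omega)
    have hTpos : (0 : ℝ) < T := by positivity
    have key := hyp T hT1
    -- lower bound for the double sum
    have hsub : Finset.Icc (m + 1) T ⊆ Finset.Icc 1 T := by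
      intro i hi
      simp only [Finset.mem_Icc] at *
      omega
    have hlow : ((T - m : ℕ) : ℝ) * S ≤
        ∑ t ∈ Finset.Icc 1 T, ∑ s ∈ Finset.Icc 1 (t - 1), α s * x s := by
      have h1 : ∑ t ∈ Finset.Icc (m + 1) T, ∑ s ∈ Finset.Icc 1 (t - 1), α s * x s ≤
          ∑ t ∈ Finset.Icc 1 T, ∑ s ∈ Finset.Icc 1 (t - 1), α s * x s :=
        Finset.sum_le_sum_of_subset_of_nonneg hsub
          (fun i _ _ => Finset.sum_nonneg fun s _ => hterm s)
      have h2 : ((T - m : ℕ) : ℝ) * S ≤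
          ∑ t ∈ Finset.Icc (m + 1) T, ∑ s ∈ Finset.Icc 1 (t - 1), α s * x s := by
        have hcard : (Finset.Icc (m + 1) T).card = T - m := by
          rw [Nat.card_Icc]; omega
        calc ((T - m : ℕ) : ℝ) * S = ∑ _t ∈ Finset.Icc (m + 1) T, S := by
              rw [Finset.sum_const, hcard, nsmul_eq_mul]
          _ ≤ _ := by
              refine Finset.sum_le_sum fun t ht => ?_
              refine Finset.sum_le_sum_of_subset_of_nonneg ?_
                (fun i _ _ => hterm i)
              intro i hi
              simp only [Finset.mem_Icc] at *
              omega
      linarith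
    have hεT : ∑ t ∈ Finset.Icc 1 T, ∑ s ∈ Finset.Icc 1 (t - 1), α s * x s ≤ ε * T := by
      have := key
      rw [inv_mul_le_iff₀ hTpos] at this
      linarith [this]
    have hcast : ((T - m : ℕ) : ℝ) = (T : ℝ) - m := by
      rw [Nat.cast_sub hTm'.le]
    have hineq : ((T : ℝ) - m) * S ≤ ε * T := by
      rw [← hcast]; linarith
    have hT2 : (m : ℝ) * S / (S - ε) < T := lt_of_le_of_lt (le_max_right _ _) hT
    rw [div_lt_iff₀ hSε] at hT2
    nlinarith
  intro t ht htε
  -- first claim: α t * x t ≤ ε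
  have hmem : t ∈ Finset.Icc 1 t := by simp [ht]
  have h1 : α t * x t ≤ ∑ s ∈ Finset.Icc 1 t, α s * x s :=
    Finset.single_le_sum (fun i _ => hterm i) hmem
  have hfst : α t * x t ≤ ε := le_trans h1 (hS t)
  refine ⟨hfst, ?_⟩
  -- telescoping: α n = 1 - partial sum
  have htel : ∀ n : ℕ, 1 ≤ n → α n = 1 - ∑ s ∈ Finset.Icc 1 (n - 1), α s * x s := by
    intro n hn
    induction n with
    | zero => omega
    | succ k ih =>
      rcases Nat.eq_or_lt_of_le hn with h | h
      · simp [← h, hα]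
      · have hk : 1 ≤ k := by omega
        obtain ⟨j, rfl⟩ : ∃ j, k = j + 1 := ⟨k - 1, by omega⟩
        have hαk : α (j + 1 + 1) = α (j + 1) * (1 - x (j + 1)) := by
          rw [hα, hα]
          simp only [Nat.add_sub_cancel]
          rw [Finset.prod_Icc_succ_top (by omega : 1 ≤ j + 1)]
        rw [hαk, ih hk]
        have : ∑ s ∈ Finset.Icc 1 (j + 1 + 1 - 1), α s * x s =
            ∑ s ∈ Finset.Icc 1 (j + 1 - 1), α s * x s + α (j + 1) * x (j + 1) := by
          simp only [Nat.add_sub_cancel]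
          rw [Finset.sum_Icc_succ_top (by omega : 1 ≤ j + 1)]
        rw [this, ih hk]
        ring
  -- each term is ≤ ε, so partial sum ≤ (t-1)ε
  have hsum_le : ∑ s ∈ Finset.Icc 1 (t - 1), α s * x s ≤ ((t : ℝ) - 1) * ε := by
    have : ∑ s ∈ Finset.Icc 1 (t - 1), α s * x s ≤
        ∑ _s ∈ Finset.Icc 1 (t - 1), ε := by
      refine Finset.sum_le_sum fun s hs => ?_
      simp only [Finset.mem_Icc] at hs
      have hmem' : s ∈ Finset.Icc 1 s := by simp [hs.1]
      exact le_trans (Finset.single_le_sum (fun i _ => hterm i) hmem') (hS s)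
    rw [Finset.sum_const, Nat.card_Icc, nsmul_eq_mul] at this
    have hc : ((t - 1 + 1 - 1 : ℕ) : ℝ) = (t : ℝ) - 1 := by
      simp only [Nat.add_sub_cancel]
      rw [Nat.cast_sub ht]; simp
    rw [hc] at this
    exact this
  have hαt : 1 - ((t : ℝ) - 1) * ε ≤ α t := by
    rw [htel t ht]; linarith
  have hbpos : 0 < 1 - ((t : ℝ) - 1) * ε := by linarith
  have hαtpos : 0 < α t := lt_of_lt_of_le hbpos hαt
  have hx1 : x t ≤ ε / α t := by
    rw [le_div_iff₀ hαtpos]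
    linarith [hfst, mul_comm (α t) (x t)]
  exact le_trans hx1 (div_le_div_of_nonneg_left hε0.le hbpos hαt)
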